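/- arXiv:2212.00879 — 2 statements merged into one kernel-verified Lean document; each statement's English description precedes it below -/
import Mathlib

section
/- (Folklore multilinear Lipschitz bound) Let C : [-1,1]^N → [-1,1] be a multilinear function (bounded by 1 in absolute value on the cube). Then for all z, z' ∈ [-1,1]^N, |C(z) − C(z')| ≤ 2N·‖z − z'‖_∞. -/
open Finset

/-- Folklore multilinear Lipschitz bound: if `C : [-1,1]^N → [-1,1]` is multilinear
(a real polynomial of degree at most 1 in each variable, bounded by 1 on the cube), then
for all `z, z'` in the cube, `|C(z) − C(z')| ≤ 2N·‖z − z'‖_∞`. -/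
theorem multilinear_lipschitz (N : ℕ) (coef : Finset (Fin N) → ℝ) (C : (Fin N → ℝ) → ℝ)
    (hC : ∀ z, C z = ∑ S : Finset (Fin N), coef S * ∏ i ∈ S, z i)
    (hbound : ∀ z : Fin N → ℝ, (∀ i, |z i| ≤ 1) → |C z| ≤ 1) :
    ∀ z z' : Fin N → ℝ, (∀ i, |z i| ≤ 1) → (∀ i, |z' i| ≤ 1) →
      |C z - C z'| ≤ 2 * N * ‖z - z'‖ := by
  have haff : ∀ (w : Fin N → ℝ) (j : Fin N) (t s : ℝ),
      C (Function.update w j t) - C (Function.update w j s)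
        = (t - s) * ∑ S ∈ univ.filter (fun S => j ∈ S), coef S * ∏ i ∈ S.erase j, w i := by
    intro w j t s
    rw [hC, hC, ← Finset.sum_sub_distrib, Finset.mul_sum,
      ← Finset.sum_filter_add_sum_filter_not univ (fun S => j ∈ S)]
    have h2 : ∑ S ∈ univ.filter (fun S => ¬ j ∈ S),
        (coef S * ∏ i ∈ S, Function.update w j t i
          - coef S * ∏ i ∈ S, Function.update w j s i) = 0 := by
      apply Finset.sum_eq_zero
      intro S hS
      simp only [mem_filter] at hS
      have hp : ∀ u : ℝ, ∏ i ∈ S, Function.update w j u i = ∏ i ∈ S, w i := by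
        intro u; apply Finset.prod_congr rfl
        intro i hi
        exact Function.update_of_ne (by rintro rfl; exact hS.2 hi) _ _
      rw [hp, hp]; ring
    rw [h2, add_zero]
    apply Finset.sum_congr rfl
    intro S hS
    simp only [mem_filter] at hS
    have hprod : ∀ u : ℝ, ∏ i ∈ S, Function.update w j u i = u * ∏ i ∈ S.erase j, w i := by
      intro u
      rw [← Finset.mul_prod_erase S _ hS.2]
      congr 1
      · exact Function.update_self _ _ _
      · apply Finset.prod_congr rfl
        intro i hi
        exact Function.update_of_ne (Finset.ne_of_mem_erase hi) _ _
    rw [hprod, hprod]; ring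
  have key : ∀ (w : Fin N → ℝ), (∀ i, |w i| ≤ 1) → ∀ (j : Fin N) (t s : ℝ),
      |C (Function.update w j t) - C (Function.update w j s)| ≤ |t - s| := by
    intro w hw j t s
    set B := ∑ S ∈ univ.filter (fun S => j ∈ S), coef S * ∏ i ∈ S.erase j, w i with hBdef
    have hcube : ∀ u : ℝ, |u| ≤ 1 → ∀ i, |Function.update w j u i| ≤ 1 := by
      intro u hu i
      rcases eq_or_ne i j with h | h
      · subst h; rw [Function.update_self]; exact hu
      · rw [Function.update_of_ne h]; exact hw i
    have h1 := haff w j 1 (-1)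
    have hb1 := hbound _ (hcube 1 (by norm_num))
    have hb2 := hbound _ (hcube (-1) (by norm_num))
    have habs : |C (Function.update w j 1) - C (Function.update w j (-1))| ≤ 2 := by
      calc |C (Function.update w j 1) - C (Function.update w j (-1))|
          ≤ |C (Function.update w j 1)| + |C (Function.update w j (-1))| := abs_sub _ _
        _ ≤ 2 := by linarith
    have hB : |B| ≤ 1 := by
      rw [h1] at habs
      rw [abs_mul] at habs
      have : |(1 : ℝ) - (-1)| = 2 := by norm_num
      rw [this] at habs
      linarith
    rw [haff w j t s, abs_mul]
    calc |t - s| * |B| ≤ |t - s| * 1 := by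
          exact mul_le_mul_of_nonneg_left hB (abs_nonneg _)
      _ = |t - s| := mul_one _
  intro z z' hz hz'
  set M := ‖z - z'‖ with hMdef
  have hM : ∀ i, |z i - z' i| ≤ M := by
    intro i
    have := norm_le_pi_norm (z - z') i
    simpa [hMdef] using this
  have hM0 : 0 ≤ M := norm_nonneg _
  set hyb : ℕ → (Fin N → ℝ) := fun k i => if i.val < k then z' i else z i with hhyb
  have hh0 : hyb 0 = z := by funext i; simp [hhyb]
  have hhN : hyb N = z' := by funext i; simp [hhyb, i.isLt]
  have hcube : ∀ k i, |hyb k i| ≤ 1 := by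
    intro k i; by_cases hik : i.val < k <;> simp [hhyb, hik, hz i, hz' i]
  have hstep : ∀ k, k < N → |C (hyb (k+1)) - C (hyb k)| ≤ M := by
    intro k hk
    set j : Fin N := ⟨k, hk⟩ with hj
    have e1 : hyb (k+1) = Function.update (hyb k) j (z' j) := by
      funext i
      rcases eq_or_ne i j with h' | h'
      · subst h'; simp [hhyb, hj]
      · rw [Function.update_of_ne h']
        have hik : i.val ≠ k := fun hh => h' (Fin.ext hh)
        simp only [hhyb]
        by_cases hlt : i.val < k
        · simp [hlt, Nat.lt_succ_of_lt hlt]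
        · have hlt2 : ¬ i.val < k + 1 := by omega
          simp [hlt, hlt2]
    have e2 : hyb k = Function.update (hyb k) j (z j) := by
      have hjk : (hyb k) j = z j := by simp [hhyb, hj]
      rw [← hjk, Function.update_eq_self]
    calc |C (hyb (k+1)) - C (hyb k)|
        = |C (Function.update (hyb k) j (z' j)) - C (Function.update (hyb k) j (z j))| := by
          rw [← e1, ← e2]
      _ ≤ |z' j - z j| := key (hyb k) (hcube k) j _ _
      _ = |z j - z' j| := abs_sub_comm _ _
      _ ≤ M := hM j
  have tele : C z' - C z = ∑ k ∈ Finset.range N, (C (hyb (k+1)) - C (hyb k)) := by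
    rw [Finset.sum_range_sub (fun k => C (hyb k)), hh0, hhN]
  have hmain : |C z - C z'| ≤ N * M := by
    rw [abs_sub_comm, tele]
    calc |∑ k ∈ range N, (C (hyb (k+1)) - C (hyb k))|
        ≤ ∑ k ∈ range N, |C (hyb (k+1)) - C (hyb k)| := Finset.abs_sum_le_sum_abs _ _
      _ ≤ ∑ k ∈ range N, M := Finset.sum_le_sum (fun k hk => hstep k (Finset.mem_range.mp hk))
      _ = N * M := by simp [mul_comm]
  have hNM : (N : ℝ) * M ≤ 2 * N * M := by
    nlinarith [hM0, Nat.cast_nonneg (α := ℝ) N]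
  linarith
end

section
/- (Polarization of random walks) Let A₁, …, A_m ∈ [-1,1] be independent symmetric random variables with E[A_i²] ≥ p for all i. Define B₀ = 0 and B_i = B_{i-1} + (1 − |B_{i-1}|)·A_i for i = 1, …, m. Then E[B_m²] ≥ 1 − 3·exp(−mp/16). -/
open MeasureTheory ProbabilityTheory

/-- The polarizing random walk: `B₀ = 0`, `B_{i+1} = B_i + (1 − |B_i|)·A_{i+1}`. -/
noncomputable def polarWalk {Ω : Type*} (A : ℕ → Ω → ℝ) : ℕ → Ω → ℝ
  | 0 => fun _ => 0
  | (i + 1) => fun ω => polarWalk A i ω + (1 - |polarWalk A i ω|) * A (i + 1) ω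

/-- Deterministic version of the walk as a function of the steps. -/
noncomputable def walkF : (i : ℕ) → (Fin i → ℝ) → ℝ
  | 0, _ => 0
  | (i + 1), x =>
      walkF i (fun j => x j.castSucc) +
        (1 - |walkF i (fun j => x j.castSucc)|) * x (Fin.last i)

lemma walkF_measurable : ∀ i, Measurable (walkF i)
  | 0 => measurable_const
  | (i + 1) => by
      have h : Measurable fun x : Fin (i + 1) → ℝ => walkF i (fun j => x j.castSucc) :=
        (walkF_measurable i).comp (measurable_pi_lambda _ fun j => measurable_pi_apply _)
      exact h.add ((measurable_const.sub h.abs).mul (measurable_pi_apply _))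

lemma polarWalk_eq_walkF {Ω : Type*} (A : ℕ → Ω → ℝ) :
    ∀ i ω, polarWalk A i ω = walkF i (fun j : Fin i => A (j.1 + 1) ω)
  | 0, ω => rfl
  | (i + 1), ω => by
      show polarWalk A i ω + (1 - |polarWalk A i ω|) * A (i + 1) ω = _
      rw [polarWalk_eq_walkF A i ω]
      rfl

lemma polarWalk_measurable {Ω : Type*} [MeasurableSpace Ω] (A : ℕ → Ω → ℝ)
    (hA : ∀ i, Measurable (A i)) : ∀ i, Measurable (polarWalk A i)
  | 0 => measurable_const
  | (i + 1) => by
      have h := polarWalk_measurable A hA i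
      exact h.add ((measurable_const.sub h.abs).mul (hA (i + 1)))

lemma abs_step_le {b a : ℝ} (hb : |b| ≤ 1) (ha : |a| ≤ 1) :
    |b + (1 - |b|) * a| ≤ 1 := by
  have h1 : |b + (1 - |b|) * a| ≤ |b| + |(1 - |b|) * a| := abs_add_le _ _
  rw [abs_mul] at h1
  have h2 : |(1 - |b|)| = 1 - |b| := abs_of_nonneg (by linarith)
  rw [h2] at h1
  nlinarith [abs_nonneg b, abs_nonneg a]

lemma sqrt_abs_le_one {x : ℝ} (hx : x ≤ 1) : |Real.sqrt x| ≤ 1 := by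
  rw [abs_of_nonneg (Real.sqrt_nonneg x)]
  calc Real.sqrt x ≤ Real.sqrt 1 := Real.sqrt_le_sqrt hx
    _ = 1 := Real.sqrt_one

lemma key_aux {a : ℝ} (ha0 : 0 ≤ a) (ha1 : a ≤ 1) :
    Real.sqrt (1 - a) + Real.sqrt (1 + a) ≤ 2 * (1 - a ^ 2 / 16) := by
  have hs := Real.sq_sqrt (by linarith : (0:ℝ) ≤ 1 - a)
  have ht := Real.sq_sqrt (by linarith : (0:ℝ) ≤ 1 + a)
  have hs0 := Real.sqrt_nonneg (1 - a)
  have ht0 := Real.sqrt_nonneg (1 + a)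
  have hmul : Real.sqrt (1 - a) * Real.sqrt (1 + a) = Real.sqrt ((1 - a) * (1 + a)) :=
    (Real.sqrt_mul (by linarith) _).symm
  have h1 : Real.sqrt ((1 - a) * (1 + a)) ≤ 1 - a ^ 2 / 2 := by
    have h2 : (1 - a) * (1 + a) ≤ (1 - a ^ 2 / 2) ^ 2 := by nlinarith [sq_nonneg a]
    calc Real.sqrt ((1 - a) * (1 + a)) ≤ Real.sqrt ((1 - a ^ 2 / 2) ^ 2) :=
          Real.sqrt_le_sqrt h2
      _ = 1 - a ^ 2 / 2 := Real.sqrt_sq (by nlinarith)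
  have h1' : Real.sqrt (1 - a) * Real.sqrt (1 + a) ≤ 1 - a ^ 2 / 2 := by
    rw [hmul]; exact h1
  nlinarith [sq_nonneg (Real.sqrt (1 - a) + Real.sqrt (1 + a)), sq_nonneg a,
    sq_nonneg (a ^ 2), mul_nonneg hs0 ht0, h1']

lemma key_core {b a : ℝ} (hb0 : 0 ≤ b) (hb1 : b ≤ 1) (ha0 : 0 ≤ a) (ha1 : a ≤ 1) :
    Real.sqrt (1 - |b + (1 - b) * a|) + Real.sqrt (1 - |b - (1 - b) * a|)
      ≤ 2 * Real.sqrt (1 - b) * (1 - a ^ 2 / 16) := by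
  have hδ : (0:ℝ) ≤ 1 - b := by linarith
  have h1 : |b + (1 - b) * a| = b + (1 - b) * a := by
    apply abs_of_nonneg; nlinarith
  have e1 : 1 - (b + (1 - b) * a) = (1 - b) * (1 - a) := by ring
  have e2 : Real.sqrt (1 - |b + (1 - b) * a|) = Real.sqrt (1 - b) * Real.sqrt (1 - a) := by
    rw [h1, e1, Real.sqrt_mul hδ]
  have h2 : Real.sqrt (1 - |b - (1 - b) * a|) ≤ Real.sqrt (1 - b) * Real.sqrt (1 + a) := by
    have hle : 1 - |b - (1 - b) * a| ≤ (1 - b) * (1 + a) := by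
      have := le_abs_self (b - (1 - b) * a)
      nlinarith
    calc Real.sqrt (1 - |b - (1 - b) * a|) ≤ Real.sqrt ((1 - b) * (1 + a)) :=
          Real.sqrt_le_sqrt hle
      _ = Real.sqrt (1 - b) * Real.sqrt (1 + a) := Real.sqrt_mul hδ _
  have h3 := key_aux ha0 ha1
  have hsδ := Real.sqrt_nonneg (1 - b)
  calc Real.sqrt (1 - |b + (1 - b) * a|) + Real.sqrt (1 - |b - (1 - b) * a|)
      ≤ Real.sqrt (1 - b) * (Real.sqrt (1 - a) + Real.sqrt (1 + a)) := by
        rw [e2]; nlinarith [h2]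
    _ ≤ Real.sqrt (1 - b) * (2 * (1 - a ^ 2 / 16)) :=
        mul_le_mul_of_nonneg_left h3 hsδ
    _ = 2 * Real.sqrt (1 - b) * (1 - a ^ 2 / 16) := by ring

lemma key_bpos {b a : ℝ} (hb0 : 0 ≤ b) (hb1 : b ≤ 1) (ha : |a| ≤ 1) :
    Real.sqrt (1 - |b + (1 - b) * a|) + Real.sqrt (1 - |b - (1 - b) * a|)
      ≤ 2 * Real.sqrt (1 - b) * (1 - a ^ 2 / 16) := by
  rcases le_or_gt 0 a with ha0 | ha0
  · exact key_core hb0 hb1 ha0 (abs_le.1 ha).2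
  · have h := key_core hb0 hb1 (by linarith : (0:ℝ) ≤ -a)
      (by have := (abs_le.1 ha).1; linarith)
    have e1 : b + (1 - b) * -a = b - (1 - b) * a := by ring
    have e2 : b - (1 - b) * -a = b + (1 - b) * a := by ring
    rw [e1, e2] at h
    have e3 : (-a) ^ 2 = a ^ 2 := by ring
    rw [e3] at h
    linarith

lemma key_ptwise {b a : ℝ} (hb : |b| ≤ 1) (ha : |a| ≤ 1) :
    Real.sqrt (1 - |b + (1 - |b|) * a|) + Real.sqrt (1 - |b - (1 - |b|) * a|)
      ≤ 2 * Real.sqrt (1 - |b|) * (1 - a ^ 2 / 16) := by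
  rcases le_or_gt 0 b with hb0 | hb0
  · rw [abs_of_nonneg hb0]
    exact key_bpos hb0 (by rwa [abs_of_nonneg hb0] at hb) ha
  · have hbn : |b| = -b := abs_of_neg hb0
    have h := key_bpos (b := -b) (a := -a) (by linarith)
      (by rw [hbn] at hb; linarith) (by rwa [abs_neg])
    have e1 : -b + (1 - -b) * -a = -(b + (1 - -b) * a) := by ring
    have e2 : -b - (1 - -b) * -a = -(b - (1 - -b) * a) := by ring
    rw [e1, e2, abs_neg, abs_neg] at h
    have e3 : (-a) ^ 2 = a ^ 2 := by ring
    rw [e3] at h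
    rw [hbn]
    linarith [h]

lemma one_sub_sq_le {b : ℝ} (hb : |b| ≤ 1) : 1 - b ^ 2 ≤ 2 * Real.sqrt (1 - |b|) := by
  have h0 : (0:ℝ) ≤ 1 - |b| := by linarith
  have hs := Real.sq_sqrt h0
  have hs0 := Real.sqrt_nonneg (1 - |b|)
  have hs1 : Real.sqrt (1 - |b|) ≤ 1 := by
    calc Real.sqrt (1 - |b|) ≤ Real.sqrt 1 :=
          Real.sqrt_le_sqrt (by linarith [abs_nonneg b])
      _ = 1 := Real.sqrt_one
  nlinarith [sq_abs b, abs_nonneg b]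

/-- Boundedness gives integrability on a finite measure space. -/
lemma integrable_of_bdd {Ω : Type*} [MeasureSpace Ω] [IsFiniteMeasure (ℙ : Measure Ω)]
    {f : Ω → ℝ} (hf : Measurable f) {C : ℝ} (h : ∀ ω, |f ω| ≤ C) :
    Integrable f (ℙ : Measure Ω) :=
  (integrable_const C).mono' hf.aestronglyMeasurable
    (Filter.Eventually.of_forall (by simpa [Real.norm_eq_abs] using h))

/-- Polarization of random walks: if `A₁, …, A_m ∈ [-1,1]` are independent symmetric random
variables with `E[A_i²] ≥ p`, and `B_i` is the polarizing walk driven by them, then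
`E[B_m²] ≥ 1 − 3·exp(−mp/16)`. -/
theorem polarizing_walk_bound (Ω : Type) [MeasureSpace Ω]
    [IsProbabilityMeasure (ℙ : Measure Ω)] (m : ℕ) (p : ℝ) (A : ℕ → Ω → ℝ)
    (hmeas : ∀ i, Measurable (A i))
    (hindep : iIndepFun (fun i : Fin m => A (i.1 + 1)) ℙ)
    (hbdd : ∀ i, 1 ≤ i → i ≤ m → ∀ ω, A i ω ∈ Set.Icc (-1 : ℝ) 1)
    (hsymm : ∀ i, 1 ≤ i → i ≤ m →
      Measure.map (fun ω => -(A i ω)) ℙ = Measure.map (A i) ℙ)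
    (hvar : ∀ i, 1 ≤ i → i ≤ m → p ≤ ∫ ω, (A i ω) ^ 2 ∂ℙ) :
    1 - 3 * Real.exp (-(m * p) / 16) ≤ ∫ ω, (polarWalk A m ω) ^ 2 ∂ℙ := by
  have hBmeas : ∀ i, Measurable (polarWalk A i) := polarWalk_measurable A hmeas
  have hsqnn : (0:ℝ) ≤ ∫ ω, (polarWalk A m ω) ^ 2 ∂ℙ :=
    integral_nonneg fun ω => sq_nonneg _
  -- trivial case p ≤ 0
  rcases le_or_gt p 0 with hp | hp
  · have h1 : (1:ℝ) ≤ Real.exp (-(m * p) / 16) := by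
      have h0 : (0:ℝ) ≤ -(m * p) / 16 := by
        have : (m : ℝ) * p ≤ 0 := mul_nonpos_of_nonneg_of_nonpos (Nat.cast_nonneg m) hp
        linarith
      calc (1:ℝ) = Real.exp 0 := by simp
        _ ≤ Real.exp (-(m * p) / 16) := Real.exp_le_exp.2 h0
    linarith
  -- trivial case m = 0
  rcases Nat.eq_zero_or_pos m with hm | hm
  · subst hm
    simp only [Nat.cast_zero, zero_mul, neg_zero, zero_div, Real.exp_zero, mul_one]
    have h0 : ∫ ω, (polarWalk A 0 ω) ^ 2 ∂(ℙ : Measure Ω) = 0 := by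
      simp [polarWalk]
    rw [h0]; norm_num
  -- step bounds
  have hAbs : ∀ i, 1 ≤ i → i ≤ m → ∀ ω, |A i ω| ≤ 1 := fun i h1 h2 ω =>
    abs_le.2 ⟨(hbdd i h1 h2 ω).1, (hbdd i h1 h2 ω).2⟩
  -- p ≤ 1
  have hp1 : p ≤ 1 := by
    have h1 := hvar 1 le_rfl hm
    have h2 : ∫ ω, (A 1 ω) ^ 2 ∂ℙ ≤ ∫ _ω : Ω, (1:ℝ) ∂(ℙ : Measure Ω) := by
      apply integral_mono
      · refine integrable_of_bdd ((hmeas 1).pow_const 2) (C := 1) fun ω => ?_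
        have := hAbs 1 le_rfl hm ω
        rw [abs_pow]
        nlinarith [abs_nonneg (A 1 ω)]
      · exact integrable_const 1
      · intro ω
        show A 1 ω ^ 2 ≤ (1:ℝ)
        have := hAbs 1 le_rfl hm ω
        nlinarith [abs_nonneg (A 1 ω), sq_abs (A 1 ω)]
    simp only [integral_const, measure_univ, ENNReal.toReal_one, smul_eq_mul, one_mul, probReal_univ, mul_one] at h2
    linarith
  have h116 : (0:ℝ) ≤ 1 - p / 16 := by linarith
  -- walk stays in [-1,1]
  have habsB : ∀ i, i ≤ m → ∀ ω, |polarWalk A i ω| ≤ 1 := by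
    intro i
    induction i with
    | zero => intro _ ω; simp [polarWalk]
    | succ i ih =>
      intro hi ω
      have hb := ih (Nat.le_of_succ_le hi) ω
      have ha := hAbs (i + 1) (Nat.succ_le_succ (Nat.zero_le i)) hi ω
      exact abs_step_le hb ha
  -- main induction
  have key : ∀ i, i ≤ m →
      ∫ ω, Real.sqrt (1 - |polarWalk A i ω|) ∂ℙ ≤ (1 - p / 16) ^ i := by
    intro i
    induction i with
    | zero =>
      intro _
      simp [polarWalk]
    | succ i ih =>
      intro hi
      have him : i < m := hi
      set B := polarWalk A i with hBdef
      set X := A (i + 1) with hXdef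
      have hBm : Measurable B := hBmeas i
      have hXm : Measurable X := hmeas (i + 1)
      -- independence of B and X
      have hBA : IndepFun B X ℙ := by
        have hST : Disjoint (Finset.univ.filter (fun j : Fin m => (j : ℕ) < i))
            ({(⟨i, him⟩ : Fin m)} : Finset (Fin m)) := by
          rw [Finset.disjoint_left]
          intro j hj hj'
          rw [Finset.mem_filter] at hj
          rw [Finset.mem_singleton] at hj'
          subst hj'
          exact absurd hj.2 (lt_irrefl i)
        have hfin := hindep.indepFun_finset _ _ hST (fun j => hmeas _)
        have h := hfin.comp (φ := fun v : (Finset.univ.filter (fun j : Fin m => (j : ℕ) < i)) → ℝ =>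
            walkF i (fun j : Fin i =>
              v ⟨⟨j.1, lt_trans j.2 him⟩, Finset.mem_filter.2 ⟨Finset.mem_univ _, j.2⟩⟩))
          (ψ := fun v : ({(⟨i, him⟩ : Fin m)} : Finset (Fin m)) → ℝ =>
            v ⟨⟨i, him⟩, Finset.mem_singleton_self _⟩)
          ((walkF_measurable i).comp (measurable_pi_lambda _ fun j => measurable_pi_apply _))
          (measurable_pi_apply (⟨⟨i, him⟩, Finset.mem_singleton_self _⟩ : ({(⟨i, him⟩ : Fin m)} : Finset (Fin m))) :
            Measurable fun v : ({(⟨i, him⟩ : Fin m)} : Finset (Fin m)) → ℝ => v ⟨⟨i, him⟩, Finset.mem_singleton_self _⟩)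
        have e1 : ((fun v : (Finset.univ.filter (fun j : Fin m => (j : ℕ) < i)) → ℝ =>
            walkF i (fun j : Fin i =>
              v ⟨⟨j.1, lt_trans j.2 him⟩, Finset.mem_filter.2 ⟨Finset.mem_univ _, j.2⟩⟩)) ∘
            (fun ω (j : (Finset.univ.filter (fun j : Fin m => (j : ℕ) < i))) =>
              A ((j : Fin m) + 1) ω)) = B := by
          funext ω
          rw [hBdef, polarWalk_eq_walkF]
          rfl
        have e2 : ((fun v : ({(⟨i, him⟩ : Fin m)} : Finset (Fin m)) → ℝ =>
            v ⟨⟨i, him⟩, Finset.mem_singleton_self _⟩) ∘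
            (fun ω (j : ({(⟨i, him⟩ : Fin m)} : Finset (Fin m))) =>
              A ((j : Fin m) + 1) ω)) = X := rfl
        rw [e1, e2] at h
        exact h
      -- the two joint laws agree
      have hsym := hsymm (i + 1) (Nat.succ_le_succ (Nat.zero_le i)) hi
      have hmap1 : Measure.map (fun ω => (B ω, X ω)) ℙ
          = (Measure.map B ℙ).prod (Measure.map X ℙ) :=
        (indepFun_iff_map_prod_eq_prod_map_map hBm.aemeasurable hXm.aemeasurable).1 hBA
      have hBnX : IndepFun B (fun ω => -X ω) ℙ := by
        have h := hBA.comp measurable_id measurable_neg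
        exact h
      have hmap2 : Measure.map (fun ω => (B ω, -X ω)) ℙ
          = (Measure.map B ℙ).prod (Measure.map (fun ω => -X ω) ℙ) :=
        (indepFun_iff_map_prod_eq_prod_map_map hBm.aemeasurable hXm.neg.aemeasurable).1 hBnX
      have hmapeq : Measure.map (fun ω => (B ω, -X ω)) ℙ
          = Measure.map (fun ω => (B ω, X ω)) ℙ := by
        rw [hmap2, hmap1]
        have hx : Measure.map (fun ω => -X ω) ℙ = Measure.map X ℙ := hsym
        rw [hx]
      have hg : Measurable (fun q : ℝ × ℝ => Real.sqrt (1 - |q.1 + (1 - |q.1|) * q.2|)) :=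
        (measurable_const.sub
          ((measurable_fst.add
            ((measurable_const.sub measurable_fst.abs).mul measurable_snd)).abs)).sqrt
      have hEeq : ∫ ω, Real.sqrt (1 - |B ω + (1 - |B ω|) * (-X ω)|) ∂ℙ
          = ∫ ω, Real.sqrt (1 - |B ω + (1 - |B ω|) * X ω|) ∂ℙ := by
        have e1 := integral_map (μ := (ℙ : Measure Ω)) (φ := fun ω => (B ω, -X ω))
          (hBm.prodMk hXm.neg).aemeasurable hg.aestronglyMeasurable
        have e2 := integral_map (μ := (ℙ : Measure Ω))
          (hBm.prodMk hXm).aemeasurable hg.aestronglyMeasurable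
        rw [← e1, ← e2, hmapeq]
      -- pointwise bound
      have hBb : ∀ ω, |B ω| ≤ 1 := habsB i (Nat.le_of_succ_le hi)
      have hXb : ∀ ω, |X ω| ≤ 1 := hAbs (i + 1) (Nat.succ_le_succ (Nat.zero_le i)) hi
      have hpt : ∀ ω, Real.sqrt (1 - |B ω + (1 - |B ω|) * X ω|)
            + Real.sqrt (1 - |B ω + (1 - |B ω|) * (-X ω)|)
          ≤ 2 * Real.sqrt (1 - |B ω|) * (1 - (X ω) ^ 2 / 16) := by
        intro ω
        have e : B ω + (1 - |B ω|) * (-X ω) = B ω - (1 - |B ω|) * X ω := by ring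
        rw [e]
        exact key_ptwise (hBb ω) (hXb ω)
      -- integrability
      have hI1 : Integrable (fun ω => Real.sqrt (1 - |B ω + (1 - |B ω|) * X ω|)) ℙ := by
        refine integrable_of_bdd ((measurable_const.sub
          ((hBm.add ((measurable_const.sub hBm.abs).mul hXm)).abs)).sqrt) (C := 1)
          fun ω => sqrt_abs_le_one (by linarith [abs_nonneg (B ω + (1 - |B ω|) * X ω)])
      have hI2 : Integrable (fun ω => Real.sqrt (1 - |B ω + (1 - |B ω|) * (-X ω)|)) ℙ := by
        refine integrable_of_bdd ((measurable_const.sub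
          ((hBm.add ((measurable_const.sub hBm.abs).mul hXm.neg)).abs)).sqrt) (C := 1)
          fun ω => sqrt_abs_le_one (by linarith [abs_nonneg (B ω + (1 - |B ω|) * (-X ω))])
      have hfm : Measurable (fun ω => Real.sqrt (1 - |B ω|)) :=
        (measurable_const.sub hBm.abs).sqrt
      have hIf : Integrable (fun ω => Real.sqrt (1 - |B ω|)) ℙ :=
        integrable_of_bdd hfm (C := 1)
          fun ω => sqrt_abs_le_one (by linarith [abs_nonneg (B ω)])
      have hIfX2 : Integrable (fun ω => Real.sqrt (1 - |B ω|) * (X ω) ^ 2) ℙ := by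
        refine integrable_of_bdd (hfm.mul (hXm.pow_const 2)) (C := 1) fun ω => ?_
        rw [abs_mul]
        have h1 : |Real.sqrt (1 - |B ω|)| ≤ 1 :=
          sqrt_abs_le_one (by linarith [abs_nonneg (B ω)])
        have h2 : |(X ω) ^ 2| ≤ 1 := by
          rw [abs_pow]
          nlinarith [hXb ω, abs_nonneg (X ω)]
        nlinarith [abs_nonneg (Real.sqrt (1 - |B ω|)), abs_nonneg ((X ω) ^ 2)]
      have hIrhs : Integrable (fun ω =>
          2 * Real.sqrt (1 - |B ω|) * (1 - (X ω) ^ 2 / 16)) ℙ := by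
        have e : (fun ω => 2 * Real.sqrt (1 - |B ω|) * (1 - (X ω) ^ 2 / 16))
            = fun ω => 2 * Real.sqrt (1 - |B ω|)
                - (1 / 8) * (Real.sqrt (1 - |B ω|) * (X ω) ^ 2) := by
          funext ω; ring
        rw [e]
        exact (hIf.const_mul 2).sub (hIfX2.const_mul (1 / 8))
      -- combine
      have hstep1 : (∫ ω, Real.sqrt (1 - |B ω + (1 - |B ω|) * X ω|) ∂ℙ)
            + (∫ ω, Real.sqrt (1 - |B ω + (1 - |B ω|) * (-X ω)|) ∂ℙ)
          ≤ ∫ ω, 2 * Real.sqrt (1 - |B ω|) * (1 - (X ω) ^ 2 / 16) ∂ℙ := by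
        rw [← integral_add hI1 hI2]
        exact integral_mono (hI1.add hI2) hIrhs hpt
      have hexp : ∫ ω, 2 * Real.sqrt (1 - |B ω|) * (1 - (X ω) ^ 2 / 16) ∂ℙ
          = 2 * (∫ ω, Real.sqrt (1 - |B ω|) ∂ℙ)
            - (1 / 8) * ∫ ω, Real.sqrt (1 - |B ω|) * (X ω) ^ 2 ∂ℙ := by
        have e : (fun ω => 2 * Real.sqrt (1 - |B ω|) * (1 - (X ω) ^ 2 / 16))
            = fun ω => 2 * Real.sqrt (1 - |B ω|)
                - (1 / 8) * (Real.sqrt (1 - |B ω|) * (X ω) ^ 2) := by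
          funext ω; ring
        rw [e, integral_sub (hIf.const_mul 2) (hIfX2.const_mul (1 / 8)),
          integral_const_mul, integral_const_mul]
      have hIndfX : IndepFun (fun ω => Real.sqrt (1 - |B ω|)) (fun ω => (X ω) ^ 2) ℙ := by
        have h := hBA.comp
          (show Measurable (fun x : ℝ => Real.sqrt (1 - |x|)) from
            (measurable_const.sub measurable_abs).sqrt)
          (show Measurable (fun x : ℝ => x ^ 2) from measurable_id.pow_const 2)
        exact h
      have hmul : ∫ ω, Real.sqrt (1 - |B ω|) * (X ω) ^ 2 ∂ℙ
          = (∫ ω, Real.sqrt (1 - |B ω|) ∂ℙ) * ∫ ω, (X ω) ^ 2 ∂ℙ :=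
        hIndfX.integral_mul_eq_mul_integral hfm.aestronglyMeasurable
          ((hXm.pow_const 2).aestronglyMeasurable)
      have hfnn : (0:ℝ) ≤ ∫ ω, Real.sqrt (1 - |B ω|) ∂ℙ :=
        integral_nonneg fun ω => Real.sqrt_nonneg _
      have hvarX : p ≤ ∫ ω, (X ω) ^ 2 ∂ℙ := hvar (i + 1) (Nat.succ_le_succ (Nat.zero_le i)) hi
      have hgoal1 : ∫ ω, Real.sqrt (1 - |polarWalk A (i + 1) ω|) ∂ℙ
          ≤ (1 - p / 16) * ∫ ω, Real.sqrt (1 - |B ω|) ∂ℙ := by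
        have he : ∫ ω, Real.sqrt (1 - |polarWalk A (i + 1) ω|) ∂ℙ
            = ∫ ω, Real.sqrt (1 - |B ω + (1 - |B ω|) * X ω|) ∂ℙ := rfl
        rw [he]
        have hmulp : (∫ ω, Real.sqrt (1 - |B ω|) ∂ℙ) * p
            ≤ (∫ ω, Real.sqrt (1 - |B ω|) ∂ℙ) * ∫ ω, (X ω) ^ 2 ∂ℙ :=
          mul_le_mul_of_nonneg_left hvarX hfnn
        nlinarith [hstep1, hEeq, hexp, hmul]
      calc ∫ ω, Real.sqrt (1 - |polarWalk A (i + 1) ω|) ∂ℙ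
          ≤ (1 - p / 16) * ∫ ω, Real.sqrt (1 - |B ω|) ∂ℙ := hgoal1
        _ ≤ (1 - p / 16) * (1 - p / 16) ^ i :=
            mul_le_mul_of_nonneg_left (ih (Nat.le_of_succ_le hi)) h116
        _ = (1 - p / 16) ^ (i + 1) := by ring
  -- conclude
  have hkeym := key m le_rfl
  have hIB2 : Integrable (fun ω => (polarWalk A m ω) ^ 2) ℙ := by
    refine integrable_of_bdd ((hBmeas m).pow_const 2) (C := 1) fun ω => ?_
    rw [abs_pow]
    nlinarith [habsB m le_rfl ω, abs_nonneg (polarWalk A m ω)]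
  have hIfm : Integrable (fun ω => Real.sqrt (1 - |polarWalk A m ω|)) ℙ :=
    integrable_of_bdd ((measurable_const.sub (hBmeas m).abs).sqrt) (C := 1)
      fun ω => sqrt_abs_le_one (by linarith [abs_nonneg (polarWalk A m ω)])
  have h1 : ∫ ω, (1 - (polarWalk A m ω) ^ 2) ∂ℙ
      ≤ ∫ ω, 2 * Real.sqrt (1 - |polarWalk A m ω|) ∂ℙ :=
    integral_mono ((integrable_const 1).sub hIB2) (hIfm.const_mul 2)
      fun ω => one_sub_sq_le (habsB m le_rfl ω)
  have h2 : ∫ ω, (1 - (polarWalk A m ω) ^ 2) ∂ℙ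
      = 1 - ∫ ω, (polarWalk A m ω) ^ 2 ∂ℙ := by
    rw [integral_sub (integrable_const 1) hIB2]
    simp
  have h3 : ∫ ω, 2 * Real.sqrt (1 - |polarWalk A m ω|) ∂ℙ
      = 2 * ∫ ω, Real.sqrt (1 - |polarWalk A m ω|) ∂ℙ := integral_const_mul 2 _
  have h4 : (1 - p / 16) ^ m ≤ Real.exp (-(m * p) / 16) := by
    have h5 : 1 - p / 16 ≤ Real.exp (-(p / 16)) := by
      nlinarith [Real.add_one_le_exp (-(p / 16))]
    calc (1 - p / 16) ^ m ≤ (Real.exp (-(p / 16))) ^ m := pow_le_pow_left₀ h116 h5 m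
      _ = Real.exp ((m : ℝ) * (-(p / 16))) := (Real.exp_nat_mul _ m).symm
      _ = Real.exp (-(m * p) / 16) := by congr 1; ring
  have h6 := Real.exp_pos (-(m * p) / 16)
  linarith [h1, h2.symm.le]
end
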